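/- In the two-variable model above, if additionally f is C¹ and not constant on any nonempty open interval, and f′ has at most countably many zeros, then E[|∂² log p/∂x₁∂x₂ (X₁, X₂)|] = E[|f′(X₁)|]/σ₂² > 0, where (X₁, X₂) has density p. -/

import Mathlib

open Real MeasureTheory

/-- Joint density of the two-variable additive Gaussian model
`X₁ ~ N(0, σ₁²)`, `X₂ = f(X₁) + ε`, `ε ~ N(0, σ₂²)`. -/
noncomputable def twoVarDensity (f : ℝ → ℝ) (σ₁ σ₂ : ℝ) (x₁ x₂ : ℝ) : ℝ :=
  (Real.sqrt (2 * π * σ₁ ^ 2))⁻¹ * Real.exp (-(x₁ ^ 2) / (2 * σ₁ ^ 2)) *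
    ((Real.sqrt (2 * π * σ₂ ^ 2))⁻¹ * Real.exp (-((x₂ - f x₁) ^ 2) / (2 * σ₂ ^ 2)))

lemma twoVarDensity_log (f : ℝ → ℝ) (σ₁ σ₂ : ℝ) (hσ₁ : 0 < σ₁) (hσ₂ : 0 < σ₂)
    (a b : ℝ) :
    Real.log (twoVarDensity f σ₁ σ₂ a b) =
      (Real.log (Real.sqrt (2 * π * σ₁ ^ 2))⁻¹ + (-(a ^ 2) / (2 * σ₁ ^ 2))) +
      (Real.log (Real.sqrt (2 * π * σ₂ ^ 2))⁻¹ + (-((b - f a) ^ 2) / (2 * σ₂ ^ 2))) := by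
  have h1 : (0:ℝ) < 2 * π * σ₁ ^ 2 := by positivity
  have h2 : (0:ℝ) < 2 * π * σ₂ ^ 2 := by positivity
  have c1 : (0:ℝ) < (Real.sqrt (2 * π * σ₁ ^ 2))⁻¹ := by positivity
  have c2 : (0:ℝ) < (Real.sqrt (2 * π * σ₂ ^ 2))⁻¹ := by positivity
  unfold twoVarDensity
  rw [Real.log_mul (by positivity) (by positivity),
    Real.log_mul (by positivity) (Real.exp_ne_zero _),
    Real.log_mul (by positivity) (Real.exp_ne_zero _),
    Real.log_exp, Real.log_exp]

lemma inner_deriv (f : ℝ → ℝ) (σ₁ σ₂ : ℝ) (hσ₁ : 0 < σ₁) (hσ₂ : 0 < σ₂) (a b : ℝ) :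
    deriv (fun b : ℝ => Real.log (twoVarDensity f σ₁ σ₂ a b)) b
      = -(b - f a) / σ₂ ^ 2 := by
  have hfun : (fun b : ℝ => Real.log (twoVarDensity f σ₁ σ₂ a b)) =
      fun b : ℝ =>
      (Real.log (Real.sqrt (2 * π * σ₁ ^ 2))⁻¹ + (-(a ^ 2) / (2 * σ₁ ^ 2))) +
      (Real.log (Real.sqrt (2 * π * σ₂ ^ 2))⁻¹ + (-((b - f a) ^ 2) / (2 * σ₂ ^ 2))) := by
    funext b; exact twoVarDensity_log f σ₁ σ₂ hσ₁ hσ₂ a b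
  rw [hfun]
  have h : HasDerivAt (fun b : ℝ =>
      (Real.log (Real.sqrt (2 * π * σ₁ ^ 2))⁻¹ + (-(a ^ 2) / (2 * σ₁ ^ 2))) +
      (Real.log (Real.sqrt (2 * π * σ₂ ^ 2))⁻¹ + (-((b - f a) ^ 2) / (2 * σ₂ ^ 2))))
      (-(b - f a) / σ₂ ^ 2) b := by
    have hsq : HasDerivAt (fun b : ℝ => (b - f a) ^ 2) (2 * (b - f a)) b := by
      have := ((hasDerivAt_id b).sub_const (f a)).pow 2
      simp at this
      exact this
    have h2 : HasDerivAt (fun b : ℝ => -((b - f a) ^ 2) / (2 * σ₂ ^ 2))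
        (-(b - f a) / σ₂ ^ 2) b := by
      have := (hsq.neg).div_const (2 * σ₂ ^ 2)
      refine this.congr_deriv ?_
      field_simp
    have := ((hasDerivAt_const b (Real.log (Real.sqrt (2 * π * σ₂ ^ 2))⁻¹)).add h2).const_add
      (Real.log (Real.sqrt (2 * π * σ₁ ^ 2))⁻¹ + (-(a ^ 2) / (2 * σ₁ ^ 2)))
    simpa using this
  exact h.deriv

lemma mixed_deriv (f : ℝ → ℝ) (hf : ContDiff ℝ 1 f) (σ₁ σ₂ : ℝ)
    (hσ₁ : 0 < σ₁) (hσ₂ : 0 < σ₂) (a b : ℝ) :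
    deriv (fun a : ℝ => deriv (fun b : ℝ =>
        Real.log (twoVarDensity f σ₁ σ₂ a b)) b) a = deriv f a / σ₂ ^ 2 := by
  have hfun : (fun a : ℝ => deriv (fun b : ℝ =>
      Real.log (twoVarDensity f σ₁ σ₂ a b)) b) = fun a : ℝ => -(b - f a) / σ₂ ^ 2 := by
    funext a; exact inner_deriv f σ₁ σ₂ hσ₁ hσ₂ a b
  rw [hfun]
  have hfd : HasDerivAt f (deriv f a) a :=
    (hf.differentiable one_ne_zero a).hasDerivAt
  have h : HasDerivAt (fun a : ℝ => -(b - f a) / σ₂ ^ 2) (deriv f a / σ₂ ^ 2) a := by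
    have := (((hasDerivAt_const a b).sub hfd).neg).div_const (σ₂ ^ 2)
    simpa using this
  exact h.deriv

theorem two_var_model_edge_detection
    (f : ℝ → ℝ) (hf : ContDiff ℝ 1 f) (σ₁ σ₂ : ℝ) (hσ₁ : 0 < σ₁) (hσ₂ : 0 < σ₂)
    -- f is not constant on any nonempty open interval
    (hnc : ∀ a b : ℝ, a < b → ¬ ∃ c : ℝ, ∀ x ∈ Set.Ioo a b, f x = c)
    -- f′ has at most countably many zeros
    (hzeros : {x : ℝ | deriv f x = 0}.Countable)
    -- P is the law of (X₁, X₂), with joint density p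
    (P : Measure (ℝ × ℝ))
    (hP : P = (volume : Measure (ℝ × ℝ)).withDensity
      (fun z => ENNReal.ofReal (twoVarDensity f σ₁ σ₂ z.1 z.2))) :
    (∫⁻ z, ENNReal.ofReal
        |deriv (fun a : ℝ => deriv (fun b : ℝ =>
          Real.log (twoVarDensity f σ₁ σ₂ a b)) z.2) z.1| ∂P) =
      (∫⁻ z, ENNReal.ofReal (|deriv f z.1| / σ₂ ^ 2) ∂P) ∧
    0 < ∫⁻ z, ENNReal.ofReal (|deriv f z.1| / σ₂ ^ 2) ∂P := by
  constructor
  · apply lintegral_congr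
    intro z
    congr 1
    rw [mixed_deriv f hf σ₁ σ₂ hσ₁ hσ₂ z.1 z.2, abs_div, abs_pow, abs_of_pos hσ₂]
  · -- positivity
    have hmeas : Measurable (fun z : ℝ × ℝ => ENNReal.ofReal (|deriv f z.1| / σ₂ ^ 2)) := by
      exact ((measurable_deriv f).comp measurable_fst).abs.div_const _ |>.ennreal_ofReal
    have hdens : Measurable (fun z : ℝ × ℝ => ENNReal.ofReal (twoVarDensity f σ₁ σ₂ z.1 z.2)) := by
      apply Measurable.ennreal_ofReal
      have hcf : Continuous f := hf.continuous
      have hc : Continuous (fun z : ℝ × ℝ => twoVarDensity f σ₁ σ₂ z.1 z.2) := by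
        unfold twoVarDensity
        fun_prop
      exact hc.measurable
    rw [hP, lintegral_withDensity_eq_lintegral_mul _ hdens hmeas]
    simp only [Pi.mul_apply]
    rw [lintegral_pos_iff_support (by exact hdens.mul hmeas)]
    set g : ℝ × ℝ → ENNReal := fun z =>
      ENNReal.ofReal (twoVarDensity f σ₁ σ₂ z.1 z.2) *
        ENNReal.ofReal (|deriv f z.1| / σ₂ ^ 2) with hg
    have hsub : (Function.support g)ᶜ ⊆ ({x : ℝ | deriv f x = 0} ×ˢ (Set.univ : Set ℝ)) := by
      intro z hz
      simp only [Function.mem_support, Set.mem_compl_iff, not_not] at hz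
      by_contra hzS
      have hz1 : deriv f z.1 ≠ 0 := by
        simpa [Set.mem_prod] using hzS
      have hdpos : 0 < twoVarDensity f σ₁ σ₂ z.1 z.2 := by
        unfold twoVarDensity; positivity
      have hgpos : 0 < |deriv f z.1| / σ₂ ^ 2 := by positivity
      rw [hg] at hz
      rw [mul_eq_zero] at hz
      simp only [ENNReal.ofReal_eq_zero] at hz
      rcases hz with h | h
      · exact absurd hdpos (not_lt.2 h)
      · exact absurd hgpos (not_lt.2 h)
    have hSnull : volume ({x : ℝ | deriv f x = 0} ×ˢ (Set.univ : Set ℝ)) = 0 := by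
      rw [Measure.volume_eq_prod, Measure.prod_prod, hzeros.measure_zero, zero_mul]
    have hcompl : volume (Function.support g)ᶜ = 0 := measure_mono_null hsub hSnull
    by_contra h0
    push_neg at h0
    have hsupp0 : volume (Function.support g) = 0 := le_antisymm h0 zero_le
    have huniv : volume (Set.univ : Set (ℝ × ℝ)) = 0 := by
      have : (Set.univ : Set (ℝ × ℝ)) = Function.support g ∪ (Function.support g)ᶜ := by
        simp
      rw [this]
      exact measure_union_null hsupp0 hcompl
    have : (0:ENNReal) < volume (Set.univ : Set (ℝ × ℝ)) :=
      isOpen_univ.measure_pos volume Set.univ_nonempty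
    exact this.ne' huniv
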